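/- Let G be a graph whose vertex set is partitioned into d twin classes (each class consisting of pairwise true twins or pairwise false twins). If G contains no subgraph isomorphic to the complete bipartite graph K_{t,t}, then G has a vertex cover of size at most 2dt. -/

import Mathlib

lemma exists_ktt {V : Type} (G : SimpleGraph V) (t : ℕ) (A B : Finset V)
    (hA : t ≤ A.card) (hB : t ≤ B.card) (hAB : Disjoint A B)
    (hadj : ∀ a ∈ A, ∀ b ∈ B, G.Adj a b) :
    ∃ f : (Fin t ⊕ Fin t) ↪ V,
      ∀ a b, (completeBipartiteGraph (Fin t) (Fin t)).Adj a b →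
        G.Adj (f a) (f b) := by
  obtain ⟨A', hA's, hA'c⟩ := Finset.exists_subset_card_eq hA
  obtain ⟨B', hB's, hB'c⟩ := Finset.exists_subset_card_eq hB
  let eA : Fin t ≃ A' := (finCongr hA'c.symm).trans A'.equivFin.symm
  let eB : Fin t ≃ B' := (finCongr hB'c.symm).trans B'.equivFin.symm
  have hdisj : ∀ x y : Fin t, (eA x : V) ≠ (eB y : V) := by
    intro x y h
    have hx : (eA x : V) ∈ A := hA's (eA x).2
    have hy : (eB y : V) ∈ B := hB's (eB y).2
    rw [h] at hx
    exact (Finset.disjoint_left.mp hAB hx) hy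
  refine ⟨⟨Sum.elim (fun x => (eA x : V)) (fun y => (eB y : V)), ?_⟩, ?_⟩
  · rintro (x | x) (y | y) h <;> simp only [Sum.elim_inl, Sum.elim_inr] at h
    · exact congrArg Sum.inl (eA.injective (Subtype.ext h))
    · exact absurd h (hdisj x y)
    · exact absurd h.symm (hdisj y x)
    · exact congrArg Sum.inr (eB.injective (Subtype.ext h))
  · rintro (x | x) (y | y) h <;>
      simp only [completeBipartiteGraph, SimpleGraph.fromRel_adj, Sum.isLeft,
        Sum.isRight] at h
    · exact absurd h (by simp)
    · exact hadj _ (hA's (eA x).2) _ (hB's (eB y).2)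
    · exact (hadj _ (hA's (eA y).2) _ (hB's (eB x).2)).symm
    · exact absurd h (by simp)

/-- If the vertex set of `G` is partitioned into `d` classes,
each consisting of pairwise true twins or pairwise false twins, and `G`
contains no subgraph isomorphic to `K_{t,t}`, then `G` has a vertex cover of
size at most `2dt`. -/
theorem stmt_4 {V : Type} [Fintype V] (G : SimpleGraph V) (d t : ℕ)
    (c : V → Fin d)
    (hclass : ∀ i : Fin d,
      (∀ u v : V, c u = i → c v = i → u ≠ v →
        G.Adj u v ∧ ∀ w, w ≠ u → w ≠ v → (G.Adj u w ↔ G.Adj v w)) ∨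
      (∀ u v : V, c u = i → c v = i → u ≠ v →
        ¬ G.Adj u v ∧ ∀ w, G.Adj u w ↔ G.Adj v w))
    (hfree : ¬ ∃ f : (Fin t ⊕ Fin t) ↪ V,
      ∀ a b, (completeBipartiteGraph (Fin t) (Fin t)).Adj a b →
        G.Adj (f a) (f b)) :
    ∃ C : Finset V, (∀ u v, G.Adj u v → u ∈ C ∨ v ∈ C) ∧
      C.card ≤ 2 * d * t := by
  classical
  set S : Fin d → Finset V := fun i => Finset.univ.filter (fun v => c v = i) with hS
  have hmemS : ∀ (v : V) (i : Fin d), v ∈ S i ↔ c v = i := by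
    intro v i; simp [hS]
  set TT : Fin d → Prop := fun i => ∀ u v : V, c u = i → c v = i → u ≠ v → G.Adj u v
    with hTT
  set P : Fin d → Prop := fun i => (S i).card < t ∨ TT i with hP
  refine ⟨Finset.univ.filter (fun v => P (c v)), ?_, ?_⟩
  · -- cover property
    intro u v huv
    by_contra hcon
    push_neg at hcon
    obtain ⟨hu, hv⟩ := hcon
    simp only [Finset.mem_filter, Finset.mem_univ, true_and, hP, not_or,
      not_lt] at hu hv
    have hne : u ≠ v := G.ne_of_adj huv
    by_cases hcc : c u = c v
    · -- same class: must be false-twin class, contradiction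
      rcases hclass (c u) with h | h
      · exact hu.2 (fun a b ha hb hab => (h a b ha hb hab).1)
      · exact (h u v rfl hcc.symm hne).1 huv
    · -- different classes, both big false classes
      have hFu : ∀ a b : V, c a = c u → c b = c u → a ≠ b →
          ¬ G.Adj a b ∧ ∀ w, G.Adj a w ↔ G.Adj b w := by
        rcases hclass (c u) with h | h
        · exact absurd (fun a b ha hb hab => (h a b ha hb hab).1) hu.2
        · exact h
      have hFv : ∀ a b : V, c a = c v → c b = c v → a ≠ b →
          ¬ G.Adj a b ∧ ∀ w, G.Adj a w ↔ G.Adj b w := by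
        rcases hclass (c v) with h | h
        · exact absurd (fun a b ha hb hab => (h a b ha hb hab).1) hv.2
        · exact h
      have hadj : ∀ a ∈ S (c u), ∀ b ∈ S (c v), G.Adj a b := by
        intro a ha b hb
        rw [hmemS] at ha hb
        have hav : G.Adj a v := by
          by_cases hau : a = u
          · rwa [hau]
          · exact ((hFu u a rfl ha (Ne.symm hau)).2 v).mp huv
        by_cases hbv : b = v
        · rwa [hbv]
        · exact (((hFv v b rfl hb (Ne.symm hbv)).2 a).mp hav.symm).symm
      have hdisj : Disjoint (S (c u)) (S (c v)) := by
        rw [Finset.disjoint_left]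
        intro a ha hb
        rw [hmemS] at ha hb
        exact hcc (ha ▸ hb)
      exact hfree (exists_ktt G t _ _ hu.1 hv.1
        hdisj hadj)
  · -- cardinality bound
    have key : ∀ i : Fin d,
        ((Finset.univ.filter (fun v => P (c v))).filter (fun v => c v = i)).card
          ≤ 2 * t := by
      intro i
      by_cases hPi : P i
      · have hsub : (Finset.univ.filter (fun v => P (c v))).filter
            (fun v => c v = i) ⊆ S i := by
          intro v hv
          simp only [Finset.mem_filter] at hv
          rw [hmemS]; exact hv.2
        refine le_trans (Finset.card_le_card hsub) ?_
        rcases hPi with h | h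
        · omega
        · -- true twin class has card ≤ 2t
          by_contra hbig
          push_neg at hbig
          obtain ⟨A, hAs, hAc⟩ := Finset.exists_subset_card_eq
            (show t ≤ (S i).card by omega)
          have hsd : t ≤ (S i \ A).card := by
            rw [Finset.card_sdiff_of_subset hAs]; omega
          obtain ⟨B, hBs, hBc⟩ := Finset.exists_subset_card_eq hsd
          have hdisj : Disjoint A B :=
            Finset.disjoint_of_subset_right hBs Finset.disjoint_sdiff
          refine hfree (exists_ktt G t A B (le_of_eq hAc.symm)
            (le_of_eq hBc.symm) hdisj ?_)
          intro a ha b hb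
          have hai : c a = i := (hmemS a i).mp (hAs ha)
          have hbi : c b = i := (hmemS b i).mp ((Finset.sdiff_subset) (hBs hb))
          have hab : a ≠ b := fun e =>
            Finset.disjoint_left.mp hdisj ha (e ▸ hb)
          exact h a b hai hbi hab
      · have : (Finset.univ.filter (fun v => P (c v))).filter
            (fun v => c v = i) = ∅ := by
          rw [Finset.filter_eq_empty_iff]
          intro v hv
          simp only [Finset.mem_filter, Finset.mem_univ, true_and] at hv
          intro hci
          exact hPi (hci ▸ hv)
        rw [this]; simp
    calc (Finset.univ.filter (fun v => P (c v))).card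
        = ∑ i : Fin d, ((Finset.univ.filter (fun v => P (c v))).filter
            (fun v => c v = i)).card :=
          Finset.card_eq_sum_card_fiberwise (fun x _ => Finset.mem_univ (c x))
      _ ≤ ∑ _i : Fin d, 2 * t := Finset.sum_le_sum (fun i _ => key i)
      _ = d * (2 * t) := by simp [Finset.sum_const, mul_comm]
      _ = 2 * d * t := by ring
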